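/- Let R be a commutative ring, a ∈ R, and n ≥ 1. Let f be the R-linear endomorphism of Fin n → R given by multiplication by the matrix a • C_n − 1, where C_n is the n × n cyclic permutation matrix. Then the cokernel (Fin n → R) ⧸ LinearMap.range f is isomorphic as an R-module to R ⧸ Ideal.span {a^n − 1}. -/

import Mathlib

/-- The `n × n` cyclic permutation matrix over a commutative ring `R`:
`(C_n)_{i,j} = 1` if `j = i + 1` (addition taken cyclically, i.e. modulo `n`)
and `0` otherwise. -/
def cyclicPermMatrix (n : ℕ) (R : Type*) [CommRing R] : Matrix (Fin n) (Fin n) R :=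
  Matrix.of fun i j => if (j : ℕ) = ((i : ℕ) + 1) % n then 1 else 0

section
variable {R : Type*} [CommRing R]

lemma fin_val_add_one {n : ℕ} [NeZero n] (i : Fin n) :
    ((i + 1 : Fin n) : ℕ) = ((i : ℕ) + 1) % n := by
  rw [Fin.add_def, Fin.val_one']
  conv_rhs => rw [Nat.add_mod, Nat.mod_eq_of_lt i.isLt]

lemma key {n : ℕ} [NeZero n] (a : R) (v : Fin n → R) (i : Fin n) :
    Matrix.toLin' (a • cyclicPermMatrix n R - 1) v i = a * v (i + 1) - v i := by
  rw [Matrix.toLin'_apply, Matrix.mulVec, dotProduct]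
  have : ∀ j : Fin n, (a • cyclicPermMatrix n R - 1) i j * v j
      = (if j = i + 1 then a * v j else 0) - (if i = j then v j else 0) := by
    intro j
    have h1 : ((j : ℕ) = ((i : ℕ) + 1) % n) ↔ j = i + 1 := by
      rw [← fin_val_add_one i, Fin.val_eq_val]
    simp only [Matrix.sub_apply, Matrix.smul_apply, cyclicPermMatrix, Matrix.of_apply,
      Matrix.one_apply, h1, smul_eq_mul, sub_mul]
    split_ifs <;> ring
  simp only [this, Finset.sum_sub_distrib, Finset.sum_ite_eq', Finset.sum_ite_eq, Finset.mem_univ, if_true]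
end

section
variable {R : Type*} [CommRing R] {n : ℕ} [NeZero n] (a : R)

lemma sum_key (v : Fin n → R) :
    ∑ i : Fin n, a ^ (i : ℕ) * (a * v (i + 1) - v i) = (a ^ n - 1) * v 0 := by
  have h1 : ∀ i : Fin n, a ^ (i : ℕ) * (a * v (i + 1) - v i)
      = (a ^ (if ((i+1 : Fin n) : ℕ) = 0 then n else ((i+1 : Fin n) : ℕ)) * v (i+1))
        - a ^ (i : ℕ) * v i := by
    intro i
    have hv : ((i + 1 : Fin n) : ℕ) = ((i : ℕ) + 1) % n := fin_val_add_one i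
    have hi : (i : ℕ) + 1 ≤ n := i.isLt
    rcases eq_or_lt_of_le hi with h | h
    · rw [hv, h, Nat.mod_self, if_pos rfl, show a ^ n = a ^ ((i:ℕ)+1) by rw [h], pow_succ]
      ring
    · rw [hv, Nat.mod_eq_of_lt h, if_neg (by omega)]
      rw [pow_succ]
      ring
  rw [Finset.sum_congr rfl fun i _ => h1 i, Finset.sum_sub_distrib]
  have h2 : ∑ i : Fin n, a ^ (if ((i+1 : Fin n) : ℕ) = 0 then n else ((i+1 : Fin n) : ℕ)) * v (i+1)
      = ∑ j : Fin n, a ^ (if (j : ℕ) = 0 then n else (j : ℕ)) * v j := by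
    exact Fintype.sum_equiv (Equiv.addRight (1 : Fin n))
      _ _ (fun i => rfl)
  rw [h2]
  have h3 : ∀ j : Fin n, a ^ (if (j : ℕ) = 0 then n else (j : ℕ)) * v j
      = a ^ (j : ℕ) * v j + (if j = 0 then (a ^ n - 1) * v 0 else 0) := by
    intro j
    rcases eq_or_ne j 0 with h | h
    · subst h; simp; ring
    · rw [if_neg (show (j : ℕ) ≠ 0 from fun h' => h (Fin.ext (by simp [h']))), if_neg h]
      ring
  rw [Finset.sum_congr rfl fun j _ => h3 j, Finset.sum_add_distrib,
    Finset.sum_ite_eq' Finset.univ (0 : Fin n)]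
  simp
end

section
variable {R : Type*} [CommRing R] {n : ℕ} [NeZero n] (a : R)

lemma solve_key (v : Fin n → R) (c : R)
    (hc : ∑ i : Fin n, a ^ (i : ℕ) * v i = (a ^ n - 1) * c) :
    ∃ w : Fin n → R, ∀ i : Fin n, a * w (i + 1) - w i = v i := by
  classical
  set V : ℕ → R := fun k => if h : k < n then v ⟨k, h⟩ else 0 with hV
  refine ⟨fun i => a ^ (n - (i : ℕ)) * c
    - ∑ k ∈ Finset.Ico (i : ℕ) n, a ^ (k - (i : ℕ)) * V k, ?_⟩
  have hn : 0 < n := Nat.pos_of_ne_zero (NeZero.ne n)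
  have hw0 : a ^ (n - 0) * c - ∑ k ∈ Finset.Ico 0 n, a ^ (k - 0) * V k = c := by
    have hs : ∑ k ∈ Finset.Ico 0 n, a ^ (k - 0) * V k = ∑ i : Fin n, a ^ (i : ℕ) * v i := by
      rw [← Finset.range_eq_Ico, ← Fin.sum_univ_eq_sum_range (fun k => a ^ (k - 0) * V k)]
      exact Fintype.sum_congr _ _ fun i => by simp [hV, i.isLt]
    rw [hs, hc, Nat.sub_zero]; ring
  intro i
  rcases lt_or_eq_of_le (Nat.succ_le_of_lt i.isLt) with h | h
  · have hv1 : ((i + 1 : Fin n) : ℕ) = (i : ℕ) + 1 := by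
      rw [fin_val_add_one, Nat.mod_eq_of_lt h]
    show a * (a ^ (n - ((i + 1 : Fin n) : ℕ)) * c
        - ∑ k ∈ Finset.Ico ((i + 1 : Fin n) : ℕ) n, a ^ (k - ((i + 1 : Fin n) : ℕ)) * V k)
      - (a ^ (n - (i : ℕ)) * c - ∑ k ∈ Finset.Ico (i : ℕ) n, a ^ (k - (i : ℕ)) * V k) = v i
    rw [hv1]
    have e1 : a * (a ^ (n - ((i : ℕ) + 1)) * c) = a ^ (n - (i : ℕ)) * c := by
      rw [show n - (i : ℕ) = (n - ((i : ℕ) + 1)) + 1 by omega, pow_succ]; ring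
    have e2 : a * ∑ k ∈ Finset.Ico ((i : ℕ) + 1) n, a ^ (k - ((i : ℕ) + 1)) * V k
        = ∑ k ∈ Finset.Ico ((i : ℕ) + 1) n, a ^ (k - (i : ℕ)) * V k := by
      rw [Finset.mul_sum]
      refine Finset.sum_congr rfl fun k hk => ?_
      rw [Finset.mem_Ico] at hk
      rw [show k - (i : ℕ) = (k - ((i : ℕ) + 1)) + 1 by omega, pow_succ]; ring
    have e3 : ∑ k ∈ Finset.Ico (i : ℕ) n, a ^ (k - (i : ℕ)) * V k
        = a ^ 0 * V (i : ℕ) + ∑ k ∈ Finset.Ico ((i : ℕ) + 1) n, a ^ (k - (i : ℕ)) * V k := by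
      rw [Finset.sum_eq_sum_Ico_succ_bot i.isLt, Nat.sub_self]
    rw [mul_sub, e1, e2, e3]
    simp only [pow_zero, one_mul, hV]
    rw [dif_pos i.isLt]
    simp only [Fin.eta]
    ring
  · have hv1 : ((i + 1 : Fin n) : ℕ) = 0 := by
      have h' : (i : ℕ) + 1 = n := h
      rw [fin_val_add_one, h', Nat.mod_self]
    show a * (a ^ (n - ((i + 1 : Fin n) : ℕ)) * c
        - ∑ k ∈ Finset.Ico ((i + 1 : Fin n) : ℕ) n, a ^ (k - ((i + 1 : Fin n) : ℕ)) * V k)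
      - (a ^ (n - (i : ℕ)) * c - ∑ k ∈ Finset.Ico (i : ℕ) n, a ^ (k - (i : ℕ)) * V k) = v i
    rw [hv1, hw0, show n - (i : ℕ) = 1 by omega,
      show Finset.Ico (i : ℕ) n = {(i : ℕ)} by ext k; simp [Finset.mem_Ico]; omega]
    simp only [Finset.sum_singleton, Nat.sub_self, pow_zero, one_mul, pow_one, hV]
    rw [dif_pos i.isLt]
    simp only [Fin.eta]
    ring
end


/-- The cokernel of the linear endomorphism of `Fin n → R` given by the matrix
`a • C_n − 1` is isomorphic to `R ⧸ (a ^ n − 1)`. -/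
theorem cokernel_smul_cyclicPermMatrix_sub_one
    (R : Type*) [CommRing R] (a : R) (n : ℕ) (hn : 1 ≤ n) :
    Nonempty (((Fin n → R) ⧸
        LinearMap.range (Matrix.toLin' (a • cyclicPermMatrix n R - 1)))
      ≃ₗ[R] (R ⧸ Ideal.span {a ^ n - 1})) := by
  haveI : NeZero n := ⟨by omega⟩
  set I : Ideal R := Ideal.span {a ^ n - 1} with hI
  let σ : (Fin n → R) →ₗ[R] R := ∑ i : Fin n, (a ^ (i : ℕ)) • (LinearMap.proj i)
  have hσ : ∀ v, σ v = ∑ i : Fin n, a ^ (i : ℕ) * v i := fun v => by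
    simp [σ, LinearMap.sum_apply, LinearMap.smul_apply, LinearMap.proj_apply, smul_eq_mul]
  let φ : (Fin n → R) →ₗ[R] R ⧸ I := I.mkQ.comp σ
  have hker : LinearMap.range (Matrix.toLin' (a • cyclicPermMatrix n R - 1))
      = LinearMap.ker φ := by
    ext v
    constructor
    · rintro ⟨u, rfl⟩
      simp only [LinearMap.mem_ker, φ, LinearMap.comp_apply, Submodule.mkQ_apply]
      rw [Submodule.Quotient.mk_eq_zero, hσ,
        Finset.sum_congr rfl fun i _ => by rw [key a u i], sum_key]
      exact Ideal.mem_span_singleton.mpr (dvd_mul_right _ _)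
    · intro hv
      have hm : σ v ∈ I := by
        simpa [φ, Ideal.Quotient.eq_zero_iff_mem] using hv
      rw [hI, Ideal.mem_span_singleton] at hm
      obtain ⟨c, hc⟩ := hm
      rw [hσ] at hc
      obtain ⟨w, hw⟩ := solve_key a v c hc
      exact ⟨w, funext fun i => by rw [key a w i]; exact hw i⟩
  have hsurj : Function.Surjective φ := by
    intro x
    obtain ⟨r, rfl⟩ := Submodule.mkQ_surjective I x
    refine ⟨Pi.single 0 r, ?_⟩
    simp [φ, hσ, Pi.single_apply, mul_ite, Finset.sum_ite_eq']
  exact ⟨(Submodule.quotEquivOfEq _ _ hker).trans (φ.quotKerEquivOfSurjective hsurj)⟩
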